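/- arXiv:1810.08720 — 5 statements merged into one kernel-verified Lean document; each statement's English description precedes it below -/
import Mathlib

section
/- In a Busemann space X with base point x0 and constant D > 0, the product (x|y)^D = max{t ∈ [0, min(t_{γx}, t_{γy})] : d(γx(t), γy(t)) ≤ D} satisfies min{(x|y)^D, (y|z)^D} ≤ 2(x|z)^D for all x, y, z ∈ X, where γx denotes the unique geodesic from x0 to x. -/
open Set

/-- In a Busemann space with base point `x0` (where `γ x` is the unique geodesic from
`x0` to `x`, parametrized on `[0, d(x0,x)]`) and a constant `D > 0`, the product
`(x|y)^D = max{t ∈ [0, min(t_{γx},t_{γy})] : d(γx(t),γy(t)) ≤ D}` satisfies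
`min{(x|y)^D, (y|z)^D} ≤ 2 (x|z)^D`. -/
theorem stmt_3 {X : Type*} [MetricSpace X] (x0 : X) (D : ℝ) (hD : 0 < D)
    (γ : X → ℝ → X)
    (hstart : ∀ x, γ x 0 = x0)
    (hend : ∀ x, γ x (dist x0 x) = x)
    (hiso : ∀ x, ∀ s ∈ Icc (0:ℝ) (dist x0 x), ∀ t ∈ Icc (0:ℝ) (dist x0 x),
      dist (γ x s) (γ x t) = |s - t|)
    (hbusemann : ∀ x y : X, ∀ t ∈ Icc (0:ℝ) (dist x0 x), ∀ s ∈ Icc (0:ℝ) (dist x0 y),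
      ∀ c ∈ Icc (0:ℝ) 1,
        dist (γ x (c * t)) (γ y (c * s)) ≤
          c * dist (γ x t) (γ y s) + (1 - c) * dist (γ x 0) (γ y 0))
    (p : X → X → ℝ)
    (hp : ∀ x y, IsGreatest
      {t | t ∈ Icc (0:ℝ) (min (dist x0 x) (dist x0 y)) ∧ dist (γ x t) (γ y t) ≤ D}
      (p x y)) :
    ∀ x y z : X, min (p x y) (p y z) ≤ 2 * p x z := by
  intro x y z
  -- Key lemma: along [0, p a b], the geodesics stay within D of each other.
  have key : ∀ a b : X, ∀ t, 0 ≤ t → t ≤ p a b → dist (γ a t) (γ b t) ≤ D := by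
    intro a b t ht0 htp
    obtain ⟨⟨⟨hp0, hple⟩, hpd⟩, _⟩ := hp a b
    rcases eq_or_lt_of_le hp0 with h0 | h0
    · have ht : t = 0 := le_antisymm (htp.trans h0.symm.le) ht0
      simp [ht, hstart, hD.le]
    · set c := t / p a b with hc
      have hc0 : 0 ≤ c := div_nonneg ht0 hp0
      have hc1 : c ≤ 1 := (div_le_one h0).mpr htp
      have hct : c * p a b = t := div_mul_cancel₀ t h0.ne'
      have hB := hbusemann a b (p a b) ⟨hp0, hple.trans (min_le_left _ _)⟩
        (p a b) ⟨hp0, hple.trans (min_le_right _ _)⟩ c ⟨hc0, hc1⟩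
      rw [hct, hstart, hstart, dist_self, mul_zero, add_zero] at hB
      calc dist (γ a t) (γ b t) ≤ c * dist (γ a (p a b)) (γ b (p a b)) := hB
        _ ≤ 1 * D := by
            apply mul_le_mul hc1 hpd dist_nonneg zero_le_one
        _ = D := one_mul D
  set m := min (p x y) (p y z) with hm
  obtain ⟨⟨⟨hxy0, hxyle⟩, _⟩, _⟩ := hp x y
  obtain ⟨⟨⟨hyz0, hyzle⟩, _⟩, _⟩ := hp y z
  have hm0 : 0 ≤ m := le_min hxy0 hyz0
  have hmx : m ≤ dist x0 x := (min_le_left _ _).trans (hxyle.trans (min_le_left _ _))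
  have hmz : m ≤ dist x0 z := (min_le_right _ _).trans (hyzle.trans (min_le_right _ _))
  -- d(γx m, γz m) ≤ 2D
  have h2D : dist (γ x m) (γ z m) ≤ 2 * D := by
    calc dist (γ x m) (γ z m) ≤ dist (γ x m) (γ y m) + dist (γ y m) (γ z m) :=
          dist_triangle _ _ _
      _ ≤ D + D := add_le_add (key x y m hm0 (min_le_left _ _))
          (key y z m hm0 (min_le_right _ _))
      _ = 2 * D := by ring
  -- Busemann with c = 1/2
  have hB := hbusemann x z m ⟨hm0, hmx⟩ m ⟨hm0, hmz⟩ (1/2) ⟨by norm_num, by norm_num⟩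
  rw [hstart, hstart, dist_self, mul_zero, add_zero] at hB
  have hhalf : dist (γ x (1/2 * m)) (γ z (1/2 * m)) ≤ D := by
    calc dist (γ x (1/2 * m)) (γ z (1/2 * m)) ≤ 1/2 * dist (γ x m) (γ z m) := hB
      _ ≤ 1/2 * (2 * D) := by linarith
      _ = D := by ring
  have hmem : (1/2 * m) ∈ {t | t ∈ Icc (0:ℝ) (min (dist x0 x) (dist x0 z)) ∧
      dist (γ x t) (γ z t) ≤ D} := by
    refine ⟨⟨by linarith, le_min (by linarith) (by linarith)⟩, hhalf⟩
  have := (hp x z).2 hmem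
  linarith
end

section
/- In a Busemann space X with base point x0 and constant D > 0, the product (x|y)^D satisfies d(x0,x) ≤ (x|y)^D + (2/D)·(x|y)^D·d(x,y) + d(x,y) for all x, y ∈ X. -/
open Set

/-- In a Busemann space with base point `x0` and constant `D > 0`, the product
`(x|y)^D` satisfies `d(x0,x) ≤ (x|y)^D + (2/D)·(x|y)^D·d(x,y) + d(x,y)`. -/
theorem stmt_4 {X : Type*} [MetricSpace X] (x0 : X) (D : ℝ) (hD : 0 < D)
    (γ : X → ℝ → X)
    (hstart : ∀ x, γ x 0 = x0)
    (hend : ∀ x, γ x (dist x0 x) = x)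
    (hiso : ∀ x, ∀ s ∈ Icc (0:ℝ) (dist x0 x), ∀ t ∈ Icc (0:ℝ) (dist x0 x),
      dist (γ x s) (γ x t) = |s - t|)
    (hbusemann : ∀ x y : X, ∀ t ∈ Icc (0:ℝ) (dist x0 x), ∀ s ∈ Icc (0:ℝ) (dist x0 y),
      ∀ c ∈ Icc (0:ℝ) 1,
        dist (γ x (c * t)) (γ y (c * s)) ≤
          c * dist (γ x t) (γ y s) + (1 - c) * dist (γ x 0) (γ y 0))
    (p : X → X → ℝ)
    (hp : ∀ x y, IsGreatest
      {t | t ∈ Icc (0:ℝ) (min (dist x0 x) (dist x0 y)) ∧ dist (γ x t) (γ y t) ≤ D}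
      (p x y)) :
    ∀ x y : X, dist x0 x ≤ p x y + (2 / D) * p x y * dist x y + dist x y := by
  intro x y
  have hd0 : 0 ≤ dist x y := dist_nonneg
  have hdx0 : 0 ≤ dist x0 x := dist_nonneg
  have hdy0 : 0 ≤ dist x0 y := dist_nonneg
  have hT0 : 0 ≤ min (dist x0 x) (dist x0 y) := le_min hdx0 hdy0
  have hp0 : 0 ≤ p x y := (hp x y).1.1.1
  have hpT : p x y ≤ min (dist x0 x) (dist x0 y) := (hp x y).1.1.2
  have htri1 : dist x0 y ≤ dist x0 x + dist x y := dist_triangle x0 x y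
  have htri2 : dist x0 x ≤ dist x0 y + dist x y := by
    calc dist x0 x ≤ dist x0 y + dist y x := dist_triangle _ _ _
      _ = dist x0 y + dist x y := by rw [dist_comm y x]
  have hdxT : dist x0 x ≤ min (dist x0 x) (dist x0 y) + dist x y := by
    rcases min_cases (dist x0 x) (dist x0 y) with ⟨h1, h2⟩ | ⟨h1, h2⟩ <;> rw [h1] <;> linarith
  -- key: f (c*T) ≤ 2*c*d for c ∈ [0,1]
  have key : ∀ c ∈ Icc (0:ℝ) 1,
      dist (γ x (c * min (dist x0 x) (dist x0 y))) (γ y (c * min (dist x0 x) (dist x0 y)))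
        ≤ 2 * c * dist x y := by
    intro c hc
    obtain ⟨hc0, hc1⟩ := hc
    rcases le_total (dist x0 x) (dist x0 y) with hle | hle
    · have hTx : min (dist x0 x) (dist x0 y) = dist x0 x := min_eq_left hle
      rw [hTx]
      have h1 := hbusemann x y (dist x0 x) ⟨hdx0, le_refl _⟩ (dist x0 y) ⟨hdy0, le_refl _⟩ c ⟨hc0, hc1⟩
      rw [hstart x, hstart y, dist_self, hend x, hend y] at h1
      have h2 : dist (γ y (c * dist x0 x)) (γ y (c * dist x0 y)) = c * (dist x0 y - dist x0 x) := by
        rw [hiso y (c * dist x0 x) ⟨by positivity, by nlinarith⟩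
            (c * dist x0 y) ⟨by positivity, by nlinarith⟩]
        rw [abs_of_nonpos (by nlinarith)]
        ring
      calc dist (γ x (c * dist x0 x)) (γ y (c * dist x0 x))
          ≤ dist (γ x (c * dist x0 x)) (γ y (c * dist x0 y))
            + dist (γ y (c * dist x0 y)) (γ y (c * dist x0 x)) := dist_triangle _ _ _
        _ = dist (γ x (c * dist x0 x)) (γ y (c * dist x0 y))
            + dist (γ y (c * dist x0 x)) (γ y (c * dist x0 y)) := by rw [dist_comm (γ y (c * dist x0 y))]
        _ ≤ c * dist x y + c * (dist x0 y - dist x0 x) := by rw [h2]; linarith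
        _ ≤ 2 * c * dist x y := by nlinarith
    · have hTy : min (dist x0 x) (dist x0 y) = dist x0 y := min_eq_right hle
      rw [hTy]
      have h1 := hbusemann x y (dist x0 x) ⟨hdx0, le_refl _⟩ (dist x0 y) ⟨hdy0, le_refl _⟩ c ⟨hc0, hc1⟩
      rw [hstart x, hstart y, dist_self, hend x, hend y] at h1
      have h2 : dist (γ x (c * dist x0 y)) (γ x (c * dist x0 x)) = c * (dist x0 x - dist x0 y) := by
        rw [hiso x (c * dist x0 y) ⟨by positivity, by nlinarith⟩
            (c * dist x0 x) ⟨by positivity, by nlinarith⟩]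
        rw [abs_of_nonpos (by nlinarith)]
        ring
      calc dist (γ x (c * dist x0 y)) (γ y (c * dist x0 y))
          ≤ dist (γ x (c * dist x0 y)) (γ x (c * dist x0 x))
            + dist (γ x (c * dist x0 x)) (γ y (c * dist x0 y)) := dist_triangle _ _ _
        _ ≤ c * (dist x0 x - dist x0 y) + c * dist x y := by rw [h2]; linarith
        _ ≤ 2 * c * dist x y := by nlinarith
  -- main case split
  rcases le_or_gt (2 * dist x y) D with hcase | hcase
  · -- T in the set, so T ≤ p
    have hmem : min (dist x0 x) (dist x0 y) ∈
        {t | t ∈ Icc (0:ℝ) (min (dist x0 x) (dist x0 y)) ∧ dist (γ x t) (γ y t) ≤ D} := by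
      refine ⟨⟨hT0, le_refl _⟩, ?_⟩
      have := key 1 ⟨zero_le_one, le_refl _⟩
      rw [one_mul] at this
      linarith
    have hTp := (hp x y).2 hmem
    have hnn : 0 ≤ 2 / D * p x y * dist x y := by positivity
    linarith
  · -- c0 = D / (2 d), c0 * T in set
    have hd0' : 0 < dist x y := by linarith
    have hc0 : (0:ℝ) < D / (2 * dist x y) := by positivity
    have hc1 : D / (2 * dist x y) ≤ 1 := by
      rw [div_le_one (by linarith)]; linarith
    have hmem : D / (2 * dist x y) * min (dist x0 x) (dist x0 y) ∈
        {t | t ∈ Icc (0:ℝ) (min (dist x0 x) (dist x0 y)) ∧ dist (γ x t) (γ y t) ≤ D} := by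
      refine ⟨⟨by positivity, by nlinarith⟩, ?_⟩
      have := key (D / (2 * dist x y)) ⟨le_of_lt hc0, hc1⟩
      have heq : 2 * (D / (2 * dist x y)) * dist x y = D := by
        field_simp
      linarith [this, heq.le]
    have hTp := (hp x y).2 hmem
    -- D/(2d) * T ≤ p  ⇒  T ≤ 2d/D * p
    have h1 : D * min (dist x0 x) (dist x0 y) ≤ p x y * (2 * dist x y) := by
      rw [div_mul_eq_mul_div, div_le_iff₀ (by positivity)] at hTp
      linarith
    have hT' : min (dist x0 x) (dist x0 y) ≤ 2 / D * p x y * dist x y := by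
      rw [div_mul_eq_mul_div, div_mul_eq_mul_div, le_div_iff₀ hD]
      nlinarith
    linarith
end

section
/- The space X = {(0,0)} ∪ ℕ² with metric d(x1,x2) = |n1 - n2| if m1 = m2, and n1 + n2 otherwise, is 0-hyperbolic: the Gromov product at x0 = (0,0) satisfies min{(x|y)_{x0}, (y|z)_{x0}} ≤ (x|z)_{x0} for all x, y, z ∈ X. -/
/-- The space `X = {(0,0)} ∪ ℕ≥1 × ℕ≥1`. -/
def Xpt : Type := {q : ℕ × ℕ // q = (0, 0) ∨ (1 ≤ q.1 ∧ 1 ≤ q.2)}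

/-- `d((m1,n1),(m2,n2)) = |n1 - n2|` if `m1 = m2` and `n1 + n2` otherwise. -/
noncomputable def dX (a b : Xpt) : ℝ :=
  if a.1.1 = b.1.1 then |(a.1.2 : ℝ) - (b.1.2 : ℝ)| else (a.1.2 : ℝ) + (b.1.2 : ℝ)

/-- The Gromov product at `x0 = (0,0)` on `X`. -/
noncomputable def gpX (a b : Xpt) : ℝ :=
  (dX ⟨(0, 0), Or.inl rfl⟩ a + dX ⟨(0, 0), Or.inl rfl⟩ b - dX a b) / 2

lemma dX_base (a : Xpt) : dX ⟨(0, 0), Or.inl rfl⟩ a = a.1.2 := by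
  unfold dX
  rcases a.2 with h | h
  · simp [h]
  · rw [if_neg (by simpa using Nat.ne_of_lt h.1), Nat.cast_zero, zero_add]

lemma gpX_eq (a b : Xpt) :
    gpX a b = if a.1.1 = b.1.1 then min (a.1.2 : ℝ) (b.1.2 : ℝ) else 0 := by
  unfold gpX
  rw [dX_base, dX_base]
  unfold dX
  split_ifs with h
  · rcases le_total (a.1.2 : ℝ) (b.1.2 : ℝ) with hle | hle
    · rw [min_eq_left hle, abs_of_nonpos (by linarith)]; ring
    · rw [min_eq_right hle, abs_of_nonneg (by linarith)]; ring
  · ring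

/-- `X = {(0,0)} ∪ ℕ²` with the metric `dX` is `0`-hyperbolic:
`min{(x|y),(y|z)} ≤ (x|z)` for the Gromov product at `x0 = (0,0)`. -/
theorem stmt_11 :
    ∀ x y z : Xpt, min (gpX x y) (gpX y z) ≤ gpX x z := by
  intro x y z
  rw [gpX_eq, gpX_eq, gpX_eq]
  split_ifs with h1 h2 h3 h3 h2 h3 h3
  · exact le_trans (min_le_min (min_le_left _ _) (min_le_right _ _)) le_rfl
  · exact absurd (h1.trans h2) h3
  · calc min (min (x.1.2:ℝ) y.1.2) 0 ≤ 0 := min_le_right _ _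
      _ ≤ min (x.1.2:ℝ) (z.1.2:ℝ) := le_min (Nat.cast_nonneg _) (Nat.cast_nonneg _)
  · exact min_le_right _ _
  · calc min (0:ℝ) (min (y.1.2:ℝ) z.1.2) ≤ 0 := min_le_left _ _
      _ ≤ min (x.1.2:ℝ) (z.1.2:ℝ) := le_min (Nat.cast_nonneg _) (Nat.cast_nonneg _)
  · exact min_le_left _ _
  · calc min (0:ℝ) 0 ≤ 0 := min_le_left _ _
      _ ≤ min (x.1.2:ℝ) (z.1.2:ℝ) := le_min (Nat.cast_nonneg _) (Nat.cast_nonneg _)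
  · exact min_le_left _ _
end

section
/- Let (X,d) be a metric space with a pre-controlled product and extend (·|·) to X̄ = X ∪ ∂X by (x|y) = inf{liminf_{i→∞}(x_i|y_i) : (x_i) ∈ x, (y_i) ∈ y}. Then there exists a non-decreasing function ρ̄1: ℝ≥0 ∪ {∞} → ℝ≥0 ∪ {∞} with ρ̄1(ℝ≥0) ⊆ ℝ≥0, ρ̄1(∞) = ∞, and min{(x|y), (y|z)} ≤ ρ̄1((x|z)) for all x, y, z ∈ X̄; in fact ρ̄1(t) = ρ1(t+1) works, where ρ1 witnesses (CP1). -/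
open Filter

/-- A pre-controlled product on a metric space `X` at `x0`: a nonnegative symmetric
function satisfying (CP1)-(CP3) with witnessing non-decreasing functions. -/
structure PreCP (X : Type*) [MetricSpace X] (x0 : X) where
  p : X → X → ℝ
  nonneg : ∀ x y, 0 ≤ p x y
  symm : ∀ x y, p x y = p y x
  ρ1 : ℝ → ℝ
  ρ1_mono : Monotone ρ1
  cp1 : ∀ x y z, min (p x y) (p y z) ≤ ρ1 (p x z)
  ρ2 : ℝ → ℝ
  ρ2_mono : Monotone ρ2
  cp2 : ∀ x y, p x y ≤ ρ2 (dist x0 x)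
  ρ3 : ℝ → ℝ → ℝ
  ρ3_mono : ∀ s1 s2 t1 t2 : ℝ, s1 ≤ s2 → t1 ≤ t2 → ρ3 s1 t1 ≤ ρ3 s2 t2
  cp3 : ∀ x y, dist x0 x ≤ ρ3 (p x y) (dist x y)

variable {X : Type*} [MetricSpace X] {x0 : X}

/-- `S_∞(X)`: sequences with `(x_i|x_j) → ∞` as `i,j → ∞`. -/
def PreCP.Sinf (P : PreCP X x0) (u : ℕ → X) : Prop :=
  ∀ R : ℝ, ∃ N, ∀ i ≥ N, ∀ j ≥ N, R < P.p (u i) (u j)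

/-- The relation `(x_i) ∼ (y_i) ⟺ (x_i|y_i) → ∞` on `S_∞(X)`. -/
def PreCP.SeqRel (P : PreCP X x0) (u v : {u : ℕ → X // P.Sinf u}) : Prop :=
  Tendsto (fun i => P.p (u.1 i) (v.1 i)) atTop atTop

/-- The Gromov boundary `∂X = S_∞(X)/∼`. -/
def PreCP.Boundary (P : PreCP X x0) : Type _ := Quot P.SeqRel

/-- `u` represents a point of `X̄ = X ⊕ ∂X`: for a point of `X`, `u` is the constant
sequence; for a boundary point, `u` is a representative of the class. -/
def PreCP.Represents (P : PreCP X x0) (u : ℕ → X) : X ⊕ P.Boundary → Prop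
  | Sum.inl x => ∀ i, u i = x
  | Sum.inr b => ∃ h : P.Sinf u, Quot.mk P.SeqRel ⟨u, h⟩ = b

/-- The extension of the pre-controlled product to `X̄ = X ⊕ ∂X`, with values in
`ℝ≥0 ∪ {∞}` (as `EReal`): `(x|y) = inf {liminf_i (x_i|y_i) : (x_i) ∈ x, (y_i) ∈ y}`. -/
noncomputable def PreCP.extProd (P : PreCP X x0) (a b : X ⊕ P.Boundary) : EReal :=
  sInf {L : EReal | ∃ u v : ℕ → X, P.Represents u a ∧ P.Represents v b ∧
    L = liminf (fun i => ((P.p (u i) (v i) : ℝ) : EReal)) atTop}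

/-- There is a non-decreasing `ρ̄1 : ℝ≥0 ∪ {∞} → ℝ≥0 ∪ {∞}` with `ρ̄1(ℝ≥0) ⊆ ℝ≥0`,
`ρ̄1(∞) = ∞`, and `min{(x|y),(y|z)} ≤ ρ̄1((x|z))` for all `x, y, z ∈ X̄`. -/
theorem stmt_14 (P : PreCP X x0) :
    ∃ ρ : EReal → EReal, Monotone ρ ∧ ρ ⊤ = ⊤ ∧
      (∀ t : ℝ, 0 ≤ t → ∃ s : ℝ, 0 ≤ s ∧ ρ (t : EReal) = (s : EReal)) ∧
      ∀ a b c : X ⊕ P.Boundary,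
        min (P.extProd a b) (P.extProd b c) ≤ ρ (P.extProd a c) := by

  classical
  have hrep : ∀ a : X ⊕ P.Boundary, ∃ u : ℕ → X, P.Represents u a := by
    intro a
    cases a with
    | inl x => exact ⟨fun _ => x, fun i => rfl⟩
    | inr b =>
      obtain ⟨⟨u, hu⟩, hq⟩ := Quot.exists_rep b
      exact ⟨u, hu, hq⟩
  have hnonneg : ∀ a b : X ⊕ P.Boundary, 0 ≤ P.extProd a b := by
    intro a b
    apply le_sInf
    rintro L ⟨u, v, -, -, rfl⟩
    exact le_liminf_of_le (by isBoundedDefault)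
      (Eventually.of_forall fun i => EReal.coe_nonneg.mpr (P.nonneg _ _))
  refine ⟨fun t => if t = ⊤ then ⊤
      else ((max 0 (P.ρ1 (max 0 t.toReal + 1)) : ℝ) : EReal), ?_, by simp, ?_, ?_⟩
  · intro s t hst
    by_cases ht : t = ⊤
    · simp [ht]
    have hs : s ≠ ⊤ := fun h => ht (top_le_iff.mp (h ▸ hst))
    simp only [hs, ht, if_neg, if_false]
    norm_cast
    refine max_le_max le_rfl (P.ρ1_mono (add_le_add ?_ le_rfl))
    by_cases hb : s = ⊥
    · simp [hb]
    · exact max_le_max le_rfl (EReal.toReal_le_toReal hst hb ht)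
  · intro t ht
    refine ⟨max 0 (P.ρ1 (max 0 (t : EReal).toReal + 1)), le_max_left _ _, ?_⟩
    simp only [if_neg (EReal.coe_ne_top t)]
  · intro a b c
    by_cases htop : P.extProd a c = ⊤
    · simp [htop]
    simp only [if_neg htop]
    have hL0 : 0 ≤ P.extProd a c := hnonneg a c
    have hbot : P.extProd a c ≠ ⊥ := fun h => by rw [h] at hL0; exact absurd hL0 (by simp)
    set r : ℝ := (P.extProd a c).toReal + 1 with hr
    have hLr : P.extProd a c < (r : EReal) := by
      conv_lhs => rw [← EReal.coe_toReal htop hbot]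
      exact_mod_cast lt_add_one _
    obtain ⟨M, hM, hMr⟩ := sInf_lt_iff.mp hLr
    obtain ⟨u, w, hu, hw, hMeq⟩ := hM
    obtain ⟨v, hv⟩ := hrep b
    set K : ℝ := max 0 (P.ρ1 r) with hK
    have htr : 0 ≤ (P.extProd a c).toReal := by
      simpa using EReal.toReal_le_toReal hL0 (by simp) htop
    have hKval : max 0 (P.ρ1 (max 0 (P.extProd a c).toReal + 1)) = K := by
      rw [hK, max_eq_right htr]
    rw [hKval]
    by_contra hcon
    push_neg at hcon
    have hab : P.extProd a b ≤ liminf (fun i => ((P.p (u i) (v i) : ℝ) : EReal)) atTop :=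
      sInf_le ⟨u, v, hu, hv, rfl⟩
    have hbc : P.extProd b c ≤ liminf (fun i => ((P.p (v i) (w i) : ℝ) : EReal)) atTop :=
      sInf_le ⟨v, w, hv, hw, rfl⟩
    have h1 : (K : EReal) < liminf (fun i => ((P.p (u i) (v i) : ℝ) : EReal)) atTop :=
      lt_of_lt_of_le ((lt_min_iff.mp hcon).1) hab
    have h2 : (K : EReal) < liminf (fun i => ((P.p (v i) (w i) : ℝ) : EReal)) atTop :=
      lt_of_lt_of_le ((lt_min_iff.mp hcon).2) hbc
    have ev1 := eventually_lt_of_lt_liminf h1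
    have ev2 := eventually_lt_of_lt_liminf h2
    have freq : ∃ᶠ i in atTop, ((P.p (u i) (w i) : ℝ) : EReal) < (r : EReal) :=
      frequently_lt_of_liminf_lt (by isBoundedDefault) (hMeq ▸ hMr)
    obtain ⟨i, ⟨e1, e2⟩, e3⟩ := ((ev1.and ev2).and_frequently freq).exists
    have e1' : K < P.p (u i) (v i) := by exact_mod_cast e1
    have e2' : K < P.p (v i) (w i) := by exact_mod_cast e2
    have e3' : P.p (u i) (w i) < r := by exact_mod_cast e3
    have hchain : min (P.p (u i) (v i)) (P.p (v i) (w i)) ≤ K :=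
      le_trans (P.cp1 (u i) (v i) (w i))
        (le_trans (P.ρ1_mono e3'.le) (le_max_right 0 _))
    exact absurd hchain (not_le.mpr (lt_min e1' e2'))
end

section
/- Let X be a (λ,k,E,C,θ,𝓛)-coarsely convex space with base point x0 and let D, D' both be at least max{C+1, λθ(0)+k} with D' ≤ D. Then (x|y)^D ≤ ED·(x|y)^{D'} for all x, y ∈ X; consequently (·|·)^D and (·|·)^{D'} are coarsely equivalent. -/
open Set

/-- In a `(λ,k,E,C,θ,𝓛)`-coarsely convex space with base point `x0` and
`max{C+1, λθ(0)+k} ≤ D' ≤ D`, the products satisfy `(x|y)^D ≤ ED·(x|y)^{D'}`;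
consequently `(·|·)^D` and `(·|·)^{D'}` are coarsely equivalent. -/
theorem stmt_19 {X : Type*} [MetricSpace X] (x0 : X)
    (lam k E C : ℝ) (hlam : 1 ≤ lam) (hk : 0 ≤ k) (hE : 1 ≤ E) (hC : 0 ≤ C)
    (θ : ℝ → ℝ) (hθ : Monotone θ) (hθnn : ∀ t : ℝ, 0 ≤ t → 0 ≤ θ t)
    (L : Set ((ℝ → X) × ℝ))
    (hQG : ∀ g ∈ L, 0 ≤ g.2 ∧ ∀ s ∈ Icc (0:ℝ) g.2, ∀ t ∈ Icc (0:ℝ) g.2,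
      (1 / lam) * |t - s| - k ≤ dist (g.1 s) (g.1 t) ∧
        dist (g.1 s) (g.1 t) ≤ lam * |t - s| + k)
    (hconn : ∀ x y : X, ∃ g ∈ L, g.1 0 = x ∧ g.1 g.2 = y)
    (hconv : ∀ g ∈ L, ∀ h ∈ L, ∀ t ∈ Icc (0:ℝ) g.2, ∀ s ∈ Icc (0:ℝ) h.2,
      ∀ c ∈ Icc (0:ℝ) 1,
      dist (g.1 (c * t)) (h.1 (c * s)) ≤
        c * E * dist (g.1 t) (h.1 s) + (1 - c) * E * dist (g.1 0) (h.1 0) + C)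
    (hreg : ∀ g ∈ L, ∀ h ∈ L, ∀ t ∈ Icc (0:ℝ) g.2, ∀ s ∈ Icc (0:ℝ) h.2,
      |t - s| ≤ θ (dist (g.1 0) (h.1 0) + dist (g.1 t) (h.1 s)))
    (D D' : ℝ) (hD : max (C + 1) (lam * θ 0 + k) ≤ D)
    (hD' : max (C + 1) (lam * θ 0 + k) ≤ D') (hDD' : D' ≤ D)
    (pD pD' : X → X → ℝ)
    (hpD : ∀ x y, pD x y = sSup {t | ∃ g ∈ L, ∃ h ∈ L, g.1 0 = x0 ∧ h.1 0 = x0 ∧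
      g.1 g.2 = x ∧ h.1 h.2 = y ∧ t ∈ Icc (0:ℝ) (min g.2 h.2) ∧
      dist (g.1 t) (h.1 t) ≤ D})
    (hpD' : ∀ x y, pD' x y = sSup {t | ∃ g ∈ L, ∃ h ∈ L, g.1 0 = x0 ∧ h.1 0 = x0 ∧
      g.1 g.2 = x ∧ h.1 h.2 = y ∧ t ∈ Icc (0:ℝ) (min g.2 h.2) ∧
      dist (g.1 t) (h.1 t) ≤ D'}) :
    (∀ x y : X, pD x y ≤ E * D * pD' x y) ∧
    (∃ ρm ρp : ℝ → ℝ, Monotone ρm ∧ Monotone ρp ∧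
      Filter.Tendsto ρm Filter.atTop Filter.atTop ∧
      ∀ x y : X, ρm (pD x y) ≤ pD' x y ∧ pD' x y ≤ ρp (pD x y)) := by
  have hCD : C + 1 ≤ D := le_trans (le_max_left _ _) hD
  have hCD' : C + 1 ≤ D' := le_trans (le_max_left _ _) hD'
  have hDpos : (0:ℝ) < D := by linarith
  have hD'pos : (0:ℝ) < D' := by linarith
  have hE0 : (0:ℝ) < E := by linarith
  have hED : (0:ℝ) < E * D := by positivity
  have hlam0 : (0:ℝ) < lam := by linarith
  let S : ℝ → X → X → Set ℝ := fun Dv x y =>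
    {t | ∃ g ∈ L, ∃ h ∈ L, g.1 0 = x0 ∧ h.1 0 = x0 ∧
      g.1 g.2 = x ∧ h.1 h.2 = y ∧ t ∈ Icc (0:ℝ) (min g.2 h.2) ∧
      dist (g.1 t) (h.1 t) ≤ Dv}
  have hpDS : ∀ x y, pD x y = sSup (S D x y) := hpD
  have hpD'S : ∀ x y, pD' x y = sSup (S D' x y) := hpD'
  have hmono : ∀ x y, S D' x y ⊆ S D x y := by
    rintro x y t ⟨g, hg, h, hh, h1, h2, h3, h4, h5, h6⟩
    exact ⟨g, hg, h, hh, h1, h2, h3, h4, h5, le_trans h6 hDD'⟩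
  have hne : ∀ x y, (0:ℝ) ∈ S D' x y := by
    intro x y
    obtain ⟨g, hg, hg0, hgx⟩ := hconn x0 x
    obtain ⟨h, hh, hh0, hhy⟩ := hconn x0 y
    refine ⟨g, hg, h, hh, hg0, hh0, hgx, hhy,
      ⟨le_refl 0, le_min (hQG g hg).1 (hQG h hh).1⟩, ?_⟩
    rw [hg0, hh0, dist_self]; linarith
  have hbdd : ∀ x y, BddAbove (S D x y) := by
    intro x y
    refine ⟨lam * (dist x0 x + k), ?_⟩
    rintro t ⟨g, hg, h, hh, h1, h3, h2, h4, ⟨ht0, htm⟩, h6⟩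
    have hg2 : 0 ≤ g.2 := (hQG g hg).1
    have hlow := ((hQG g hg).2 0 ⟨le_refl 0, hg2⟩ g.2 ⟨hg2, le_refl _⟩).1
    rw [h1, h2, sub_zero, abs_of_nonneg hg2] at hlow
    have hl : lam * (1 / lam) = 1 := mul_one_div_cancel (ne_of_gt hlam0)
    have hgle : g.2 ≤ lam * (dist x0 x + k) := by nlinarith
    calc t ≤ min g.2 h.2 := htm
      _ ≤ g.2 := min_le_left _ _
      _ ≤ lam * (dist x0 x + k) := hgle
  have hbdd' : ∀ x y, BddAbove (S D' x y) :=
    fun x y => BddAbove.mono (hmono x y) (hbdd x y)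
  have main : ∀ x y : X, pD x y ≤ E * D * pD' x y := by
    intro x y
    rw [hpDS, hpD'S]
    apply csSup_le ⟨0, hmono x y (hne x y)⟩
    rintro t ⟨g, hg, h, hh, h1, h2, h3, h4, ⟨ht0, htm⟩, h6⟩
    set c : ℝ := (D' - C) / (E * D) with hc
    have hc0 : 0 ≤ c := div_nonneg (by linarith) hED.le
    have hc1 : c ≤ 1 := by
      rw [hc, div_le_one hED]; nlinarith
    have hceq : c * (E * D) = D' - C := div_mul_cancel₀ _ (ne_of_gt hED)
    have hmem : c * t ∈ S D' x y := by
      refine ⟨g, hg, h, hh, h1, h2, h3, h4,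
        ⟨mul_nonneg hc0 ht0, le_trans (mul_le_of_le_one_left ht0 hc1) htm⟩, ?_⟩
      have htg : t ∈ Icc (0:ℝ) g.2 := ⟨ht0, le_trans htm (min_le_left _ _)⟩
      have hth : t ∈ Icc (0:ℝ) h.2 := ⟨ht0, le_trans htm (min_le_right _ _)⟩
      have hcv := hconv g hg h hh t htg t hth c ⟨hc0, hc1⟩
      rw [h1, h2] at hcv
      simp only [dist_self, mul_zero, add_zero] at hcv
      have hcE : c * E * dist (g.1 t) (h.1 t) ≤ c * E * D :=
        mul_le_mul_of_nonneg_left h6 (by positivity)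
      have hcED : c * E * D = D' - C := by rw [mul_assoc]; exact hceq
      linarith
    have hle : c * t ≤ sSup (S D' x y) := le_csSup (hbdd' x y) hmem
    have h7 : c * t * (E * D) ≤ sSup (S D' x y) * (E * D) :=
      mul_le_mul_of_nonneg_right hle hED.le
    have h8 : c * t * (E * D) = t * (D' - C) := by
      rw [mul_comm c t, mul_assoc, hceq]
    have h9 : t ≤ t * (D' - C) := by
      nlinarith [mul_nonneg ht0 (show (0:ℝ) ≤ D' - C - 1 by linarith)]
    nlinarith
  refine ⟨main, fun t => t / (E * D), id, ?_, monotone_id, ?_, ?_⟩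
  · intro a b hab
    exact div_le_div_of_nonneg_right hab hED.le
  · exact Filter.tendsto_id.atTop_div_const hED
  · intro x y
    constructor
    · rw [div_le_iff₀ hED]
      calc pD x y ≤ E * D * pD' x y := main x y
        _ = pD' x y * (E * D) := by ring
    · show pD' x y ≤ pD x y
      rw [hpDS, hpD'S]
      exact csSup_le_csSup (hbdd x y) ⟨0, hne x y⟩ (hmono x y)
end
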